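/- The subshift (Y_{1^∞}, S), where 1^∞ = (1,1,1,...) ∈ {0,1}^ℕ, is not minimal. -/

import Mathlib

open MeasureTheory Filter Topology
open scoped ENNReal

attribute [local instance] Classical.propDecidable

noncomputable section

/-- The shift map on bi-infinite sequences: `(S x) n = x (n+1)`. -/
def shift {α : Type*} (x : ℤ → α) : ℤ → α := fun n => x (n + 1)

/-- Shift by an arbitrary integer amount `m`. -/
def shiftZ {α : Type*} (m : ℤ) (x : ℤ → α) : ℤ → α := fun n => x (n + m)

/-- A run structure on a bi-infinite sequence `x`: `t k` is the starting index of the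
`k`-th maximal mono-symbol block of `x`, indexed so that block `0` contains position `0`. -/
structure RunStructure (x : ℤ → ℕ) where
  t : ℤ → ℤ
  mono : StrictMono t
  start_nonpos : t 0 ≤ 0
  start_pos : 0 < t 1
  const : ∀ k i : ℤ, t k ≤ i → i < t (k + 1) → x i = x (t k)
  alt : ∀ k : ℤ, x (t (k + 1)) ≠ x (t k)

/-- `d` is the run-length derivative of `x`: `d k` is the length of the `k`-th run. -/
def IsDelta (x d : ℤ → ℕ) : Prop :=
  ∃ r : RunStructure x, ∀ k : ℤ, (d k : ℤ) = r.t (k + 1) - r.t k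

/-- The run-length derivative operator `Δ` (junk value when no derivative exists). -/
def delta (x : ℤ → ℕ) : ℤ → ℕ :=
  if h : ∃ d, IsDelta x d then h.choose else fun _ => 0

/-- A bi-infinite sequence is smooth over `{1,3}` if all its iterated derivatives exist
and take values in `{1,3}`. -/
def SmoothSeq (x : ℤ → ℕ) : Prop :=
  ∀ k : ℕ, ∀ n : ℤ, delta^[k] x n = 1 ∨ delta^[k] x n = 3

/-- The set `X` of bi-infinite smooth sequences over `{1,3}`. -/
def SmoothX : Set (ℤ → ℕ) := {x | SmoothSeq x}

/-- The recoding alphabet: `A = 1`, `B = 3`, `C = 111`, `D = 333`. -/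
inductive ABCD : Type
  | A | B | C | D
deriving DecidableEq

instance : TopologicalSpace ABCD := ⊥
instance : DiscreteTopology ABCD := ⟨rfl⟩
instance : MeasurableSpace ABCD := ⊤

open ABCD

/-- The symbol (1 or 3) of the run encoded by a letter. -/
def sval : ABCD → ℕ
  | A => 1
  | B => 3
  | C => 1
  | D => 3

/-- The length (1 or 3) of the run encoded by a letter; this is also the value of `Δx`
at the corresponding position. -/
def lval : ABCD → ℕ
  | A => 1
  | B => 1
  | C => 3
  | D => 3

/-- `y` is the recoding of `x`: the letter `y k` encodes the `k`-th run of `x`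
(its symbol and its length). -/
def IsRecoding (x : ℤ → ℕ) (y : ℤ → ABCD) : Prop :=
  ∃ r : RunStructure x, ∀ k : ℤ,
    x (r.t k) = sval (y k) ∧ r.t (k + 1) - r.t k = (lval (y k) : ℤ)

/-- The recoding map `rec` (junk value when no recoding exists). -/
def recode (x : ℤ → ℕ) : ℤ → ABCD :=
  if h : ∃ y, IsRecoding x y then h.choose else fun _ => A

/-- The set `Y = rec(X)` of recodings of smooth sequences. -/
def SmoothY : Set (ℤ → ABCD) := recode '' SmoothX

/-- The derivative operator induced on recodings: since `(Δx) i = lval (rec x i)`,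
we have `Δ(rec x) = rec (Δ x) = recode (lval ∘ rec x)`. -/
def deltaY (y : ℤ → ABCD) : ℤ → ABCD := recode fun i => (lval (y i) : ℕ)

/-- `y` is well-aligned: the elementary block of `y` containing coordinate `0` starts
at position `0` (elementary blocks of `y` are exactly the runs of `Δx`, and
`(Δx) i = lval (y i)`). -/
def WellAligned (y : ℤ → ABCD) : Prop := lval (y (-1)) ≠ lval (y 0)

/-- `B_Y^L`: the set of `y ∈ Y` such that `y, Δy, ..., Δ^{L-1} y` are all well-aligned. -/
def BY (L : ℕ) : Set (ℤ → ABCD) :=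
  {y | y ∈ SmoothY ∧ ∀ l < L, WellAligned (deltaY^[l] y)}

/-- `Σ_y^L(n) = #{k ∈ [1,n] : S^k y ∈ B_Y^L}`. -/
def SigY (L : ℕ) (y : ℤ → ABCD) (n : ℕ) : ℕ :=
  ((Finset.Icc 1 n).filter fun k => shift^[k] y ∈ BY L).card

/-- `y` contains an elementary block in `{ABA, DCD}` (for `y ∈ Y`, any such factor is
automatically an elementary block). -/
def HasType0 (y : ℤ → ABCD) : Prop :=
  ∃ i : ℤ, (y i = A ∧ y (i + 1) = B ∧ y (i + 2) = A) ∨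
           (y i = D ∧ y (i + 1) = C ∧ y (i + 2) = D)

/-- `y` contains an elementary block in `{BAB, CDC}`. -/
def HasType1 (y : ℤ → ABCD) : Prop :=
  ∃ i : ℤ, (y i = B ∧ y (i + 1) = A ∧ y (i + 2) = B) ∨
           (y i = C ∧ y (i + 1) = D ∧ y (i + 2) = C)

/-- The type of a recoded sequence: `false` = type 0, `true` = type 1. -/
def typeOf (y : ℤ → ABCD) : Bool := decide (HasType1 y)

/-- The sequence of types of the successive derivatives of a smooth sequence `x`. -/
def TypesX (x : ℤ → ℕ) : ℕ → Bool := fun n => typeOf (recode (delta^[n] x))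

/-- The sequence of types of the successive derivatives of a recoded sequence `y`. -/
def TypesY (y : ℤ → ABCD) : ℕ → Bool := fun n => typeOf (deltaY^[n] y)

/-- `X_τ`: smooth bi-infinite sequences whose type sequence is exactly `τ`. -/
def Xset (τ : ℕ → Bool) : Set (ℤ → ℕ) := {x ∈ SmoothX | TypesX x = τ}

/-- `Y_τ = rec(X_τ)`. -/
def Yset (τ : ℕ → Bool) : Set (ℤ → ABCD) := recode '' Xset τ

/-- A sequence over `{A,B,C,D}` is alternating: no two consecutive symbols in `{A,C}`
and no two consecutive symbols in `{B,D}`. -/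
def Alternating (y : ℤ → ABCD) : Prop := ∀ n : ℤ, sval (y n) ≠ sval (y (n + 1))

/-- The substitutions `φ₀` and `φ₁` on letters. -/
def phiW : Bool → ABCD → List ABCD
  | false, A => [A]
  | false, B => [D]
  | false, C => [A, B, A]
  | false, D => [D, C, D]
  | true, A => [B]
  | true, B => [C]
  | true, C => [B, A, B]
  | true, D => [C, D, C]

/-- `z` is the image of the bi-infinite sequence `y` under the substitution `φ_t`, with
the convention that the image of the letter at position `0` starts at position `0`. -/
def IsSubst (t : Bool) (y z : ℤ → ABCD) : Prop :=
  ∃ u : ℤ → ℤ, u 0 = 0 ∧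
    (∀ k : ℤ, u (k + 1) = u k + (phiW t (y k)).length) ∧
    (∀ k : ℤ, ∀ j : Fin (phiW t (y k)).length, z (u k + (j : ℕ)) = (phiW t (y k)).get j)

/-- The substitution `φ_t` on bi-infinite sequences. -/
def substF (t : Bool) (y : ℤ → ABCD) : ℤ → ABCD :=
  if h : ∃ z, IsSubst t y z then h.choose else y

/-- The composition `φ_{τ₀} ∘ φ_{τ₁} ∘ ⋯ ∘ φ_{τ_{L-1}}`. -/
def substComp (τ : ℕ → Bool) : ℕ → (ℤ → ABCD) → (ℤ → ABCD)
  | 0 => id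
  | L + 1 => substF (τ 0) ∘ substComp (fun n => τ (n + 1)) L

/-- The homographies `h₀` and `h₁`. -/
def hmap : Bool → ℝ × ℝ → ℝ × ℝ
  | false, p => ((1 - p.1) / (3 - 2 * (p.1 + p.2)), (1 / 2 - p.1) / (3 - 2 * (p.1 + p.2)))
  | true, p => ((1 / 2 - p.1) / (3 - 2 * (p.1 + p.2)), (1 - p.1) / (3 - 2 * (p.1 + p.2)))

/-- The square `K = [0,1/2] × [0,1/2]`. -/
def Ksq : Set (ℝ × ℝ) := Set.Icc (0 : ℝ) (1 / 2) ×ˢ Set.Icc (0 : ℝ) (1 / 2)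

/-- The domain `E = {(a,b) ∈ K : a + b ≤ 3/4}`. -/
def Eset : Set (ℝ × ℝ) := {p ∈ Ksq | p.1 + p.2 ≤ 3 / 4}

/-- The composition `h_{t₀} ∘ h_{t₁} ∘ ⋯ ∘ h_{t_L}`. -/
def hComp (t : ℕ → Bool) : ℕ → (ℝ × ℝ → ℝ × ℝ)
  | 0 => hmap (t 0)
  | L + 1 => hComp t L ∘ hmap (t (L + 1))

/-- The point `(a(t), b(t))`, unique point of `⋂_L (h_{t₀} ∘ ⋯ ∘ h_{t_L})(E)`. -/
def abPoint (t : ℕ → Bool) : ℝ × ℝ :=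
  if h : ∃ p : ℝ × ℝ, (⋂ L : ℕ, hComp t L '' Eset) = {p} then h.choose else 0

/-- The number of occurrences of the letter `s` among positions `1, ..., m` of `z`. -/
def letterCount (s : ABCD) (z : ℤ → ABCD) (m : ℕ) : ℕ :=
  ((Finset.Icc 1 m).filter fun k => z (k : ℤ) = s).card

/-- `w` occurs as a factor of `y` at position `i`. -/
def IsFactorAt (w : List ABCD) (y : ℤ → ABCD) (i : ℤ) : Prop :=
  ∀ j : Fin w.length, y (i + (j : ℕ)) = w.get j

/-- The cylinder set `[w]` in `{1,3}^ℤ`. -/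
def cylX (w : List ℕ) : Set (ℤ → ℕ) :=
  {x | ∀ j : Fin w.length, x ((j : ℕ) : ℤ) = w.get j}

/-- The cylinder set `[w]` in `{A,B,C,D}^ℤ`. -/
def cylY (w : List ABCD) : Set (ℤ → ABCD) :=
  {y | ∀ j : Fin w.length, y ((j : ℕ) : ℤ) = w.get j}

/-- The number of occurrences of the finite word `w` in the prefix `x₀ ⋯ x_{n-1}`. -/
def occCount (x : ℤ → ℕ) (w : List ℕ) (n : ℕ) : ℕ :=
  ((Finset.range n).filter fun i =>
    i + w.length ≤ n ∧ ∀ j : Fin w.length, x (((i + (j : ℕ) : ℕ)) : ℤ) = w.get j).card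

/-- A subshift `Z` is minimal if it contains no nonempty proper closed shift-invariant
subset. -/
def ShiftMinimal {α : Type*} [TopologicalSpace α] (Z : Set (ℤ → α)) : Prop :=
  ∀ W : Set (ℤ → α), W ⊆ Z → W.Nonempty → IsClosed W → shift '' W = W → W = Z
namespace St18
open ABCD

/-! ### Letter lemmas -/

lemma lval_pos (a : ABCD) : 0 < lval a := by cases a <;> simp [lval]
lemma lval_le (a : ABCD) : lval a ≤ 3 := by cases a <;> simp [lval]
lemma sval_cases (a : ABCD) : sval a = 1 ∨ sval a = 3 := by cases a <;> simp [sval]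
lemma lval_cases (a : ABCD) : lval a = 1 ∨ lval a = 3 := by cases a <;> simp [lval]
lemma letter_ext {a b : ABCD} (h1 : sval a = sval b) (h2 : lval a = lval b) : a = b := by
  cases a <;> cases b <;> simp_all [sval, lval]
lemma phiW_length (a : ABCD) : (phiW true a).length = lval a := by cases a <;> rfl

/-! ### shiftZ -/

lemma shiftZ_apply {α : Type*} (m : ℤ) (x : ℤ → α) (n : ℤ) : shiftZ m x n = x (n + m) := rfl
lemma shiftZ_shiftZ {α : Type*} (a b : ℤ) (x : ℤ → α) :
    shiftZ a (shiftZ b x) = shiftZ (a + b) x := by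
  funext n; simp [shiftZ, add_assoc]
lemma shiftZ_zero {α : Type*} (x : ℤ → α) : shiftZ 0 x = x := by funext n; simp [shiftZ]
lemma shift_eq_shiftZ {α : Type*} (x : ℤ → α) : shift x = shiftZ 1 x := rfl

/-! ### ulen : block boundaries -/

def ulen (y : ℤ → ABCD) (k : ℤ) : ℤ :=
  (∑ j ∈ Finset.range k.toNat, (lval (y j) : ℤ)) -
    ∑ j ∈ Finset.range (-k).toNat, (lval (y (-1 - j)) : ℤ)

lemma ulen_zero (y : ℤ → ABCD) : ulen y 0 = 0 := by simp [ulen]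

lemma ulen_succ (y : ℤ → ABCD) (k : ℤ) : ulen y (k + 1) = ulen y k + lval (y k) := by
  rcases le_or_gt 0 k with hk | hk
  · have h1 : (k + 1).toNat = k.toNat + 1 := by omega
    have h2 : (-k).toNat = 0 := by omega
    have h3 : (-(k + 1)).toNat = 0 := by omega
    have h4 : ((k.toNat : ℤ)) = k := by omega
    rw [ulen, ulen, h1, h2, h3, Finset.sum_range_succ, h4]
    simp
  · have h1 : (k + 1).toNat = 0 := by omega
    have h2 : k.toNat = 0 := by omega
    have h3 : (-k).toNat = (-(k+1)).toNat + 1 := by omega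
    have h4 : (-1 - (((-(k+1)).toNat : ℤ))) = k := by omega
    rw [ulen, ulen, h1, h2, h3, Finset.sum_range_succ, h4]
    simp

lemma ulen_strictMono (y : ℤ → ABCD) : StrictMono (ulen y) := by
  apply strictMono_int_of_lt_succ
  intro k
  have := lval_pos (y k)
  rw [ulen_succ]
  omega

lemma ulen_nat_bounds (y : ℤ → ABCD) (n : ℕ) :
    (n : ℤ) ≤ ulen y n ∧ ulen y n ≤ 3 * n := by
  induction n with
  | zero => simp [ulen_zero]
  | succ m ih =>
    have h1 : ((m + 1 : ℕ) : ℤ) = (m : ℤ) + 1 := by push_cast; ring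
    rw [h1, ulen_succ]
    have := lval_pos (y m); have := lval_le (y m)
    omega

lemma ulen_neg_bounds (y : ℤ → ABCD) (n : ℕ) :
    -(3 * n) ≤ ulen y (-(n:ℤ)) ∧ ulen y (-(n:ℤ)) ≤ -(n:ℤ) := by
  induction n with
  | zero => simp [ulen_zero]
  | succ m ih =>
    have e : -((m + 1 : ℕ) : ℤ) = -((m:ℤ)+1) := by push_cast; ring
    have h2 := ulen_succ y (-((m:ℤ)+1))
    have e2 : -((m:ℤ)+1) + 1 = -(m:ℤ) := by ring
    rw [e2] at h2
    have := lval_pos (y (-((m:ℤ)+1))); have := lval_le (y (-((m:ℤ)+1)))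
    rw [e]
    push_cast at ih ⊢
    omega

lemma le_ulen_of_nonneg (y : ℤ → ABCD) {k : ℤ} (hk : 0 ≤ k) : k ≤ ulen y k := by
  have h := ulen_nat_bounds y k.toNat
  have : ((k.toNat : ℤ)) = k := by omega
  rw [this] at h; omega

lemma ulen_le_of_nonneg (y : ℤ → ABCD) {k : ℤ} (hk : 0 ≤ k) : ulen y k ≤ 3 * k := by
  have h := ulen_nat_bounds y k.toNat
  have : ((k.toNat : ℤ)) = k := by omega
  rw [this] at h; omega

lemma ulen_le_of_nonpos (y : ℤ → ABCD) {k : ℤ} (hk : k ≤ 0) : ulen y k ≤ k := by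
  have h := ulen_neg_bounds y (-k).toNat
  have : (-(((-k).toNat : ℤ))) = k := by omega
  rw [this] at h; omega

lemma ulen_ge_of_nonpos (y : ℤ → ABCD) {k : ℤ} (hk : k ≤ 0) : 3 * k ≤ ulen y k := by
  have h := ulen_neg_bounds y (-k).toNat
  have : (-(((-k).toNat : ℤ))) = k := by omega
  rw [this] at h; omega

/-! ### blockIdx -/

lemma exists_block (y : ℤ → ABCD) (i : ℤ) : ∃ k, ulen y k ≤ i ∧ i < ulen y (k + 1) := by
  obtain ⟨ub, hub, hmax⟩ := Int.exists_greatest_of_bdd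
    (P := fun k => ulen y k ≤ i)
    ⟨i.natAbs, by
      intro z hz
      by_contra hc
      push_neg at hc
      have h0 : (0:ℤ) ≤ z := by omega
      have := le_ulen_of_nonneg y h0
      omega⟩
    ⟨-(i.natAbs) - 1, by
      have h0 : (-(i.natAbs : ℤ) - 1) ≤ 0 := by omega
      have := ulen_le_of_nonpos y h0
      omega⟩
  refine ⟨ub, hub, ?_⟩
  by_contra hc
  push_neg at hc
  have := hmax (ub + 1) hc
  omega

noncomputable def blockIdx (y : ℤ → ABCD) (i : ℤ) : ℤ := (exists_block y i).choose

lemma blockIdx_spec (y : ℤ → ABCD) (i : ℤ) :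
    ulen y (blockIdx y i) ≤ i ∧ i < ulen y (blockIdx y i + 1) :=
  (exists_block y i).choose_spec

lemma blockIdx_unique {y : ℤ → ABCD} {i k : ℤ}
    (h1 : ulen y k ≤ i) (h2 : i < ulen y (k + 1)) : blockIdx y i = k := by
  obtain ⟨s1, s2⟩ := blockIdx_spec y i
  set K := blockIdx y i with hK
  rcases lt_trichotomy K k with h | h | h
  · have : K + 1 ≤ k := by omega
    have := (ulen_strictMono y).monotone this
    omega
  · exact h
  · have : k + 1 ≤ K := by omega
    have := (ulen_strictMono y).monotone this
    omega

lemma blockIdx_block (y : ℤ → ABCD) (k : ℤ) (j : ℕ) (hj : (j:ℤ) < lval (y k)) :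
    blockIdx y (ulen y k + j) = k := by
  apply blockIdx_unique
  · omega
  · rw [ulen_succ]; omega

/-! ### expand -/

noncomputable def expand {α : Type*} (f : ABCD → List α) (d : α) (y : ℤ → ABCD) : ℤ → α :=
  fun i => (f (y (blockIdx y i))).getD (i - ulen y (blockIdx y i)).toNat d

lemma expand_apply {α : Type*} (f : ABCD → List α) (d : α) (y : ℤ → ABCD) (k : ℤ) (j : ℕ)
    (hj : (j:ℤ) < lval (y k)) :
    expand f d y (ulen y k + j) = (f (y k)).getD j d := by
  rw [expand, blockIdx_block y k j hj]
  congr 1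
  omega

lemma block_decomp (y : ℤ → ABCD) (i : ℤ) :
    ∃ (k : ℤ) (j : ℕ), (j:ℤ) < lval (y k) ∧ i = ulen y k + j := by
  obtain ⟨h1, h2⟩ := blockIdx_spec y i
  refine ⟨blockIdx y i, (i - ulen y (blockIdx y i)).toNat, ?_, ?_⟩
  · rw [ulen_succ] at h2; omega
  · omega

/-! ### shifting -/

lemma int_ext_of_succ {f g : ℤ → ℤ} (h0 : f 0 = g 0)
    (hs : ∀ k, f (k + 1) - f k = g (k + 1) - g k) : ∀ k, f k = g k := by
  intro k
  induction k using Int.induction_on with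
  | zero => exact h0
  | succ n ih => have := hs n; omega
  | pred n ih =>
    have h := hs (-(n:ℤ) - 1)
    have e : (-(n:ℤ) - 1) + 1 = -(n:ℤ) := by ring
    rw [e] at h
    omega

lemma ulen_shift (y : ℤ → ABCD) (s : ℤ) :
    ∀ k, ulen (shiftZ s y) k = ulen y (s + k) - ulen y s := by
  apply int_ext_of_succ
  · simp [ulen_zero]
  · intro k
    have h1 := ulen_succ (shiftZ s y) k
    have h2 := ulen_succ y (s + k)
    have e : s + (k + 1) = (s + k) + 1 := by ring
    rw [e]
    rw [h1, h2, shiftZ_apply]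
    have : k + s = s + k := by ring
    rw [this]
    ring

lemma expand_shift {α : Type*} (f : ABCD → List α) (d : α) (y : ℤ → ABCD) (s : ℤ) :
    expand f d (shiftZ s y) = shiftZ (ulen y s) (expand f d y) := by
  funext i
  obtain ⟨k, j, hj, hdec⟩ := block_decomp y (i + ulen y s)
  rw [shiftZ_apply, hdec, expand_apply f d y k j hj]
  have hb : ulen (shiftZ s y) (k - s) = ulen y k - ulen y s := by
    rw [ulen_shift]
    congr 2
    ring
  have hi : i = ulen (shiftZ s y) (k - s) + j := by rw [hb]; omega
  have hv : (shiftZ s y) (k - s) = y k := by rw [shiftZ_apply]; congr 1; ring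
  rw [hi, expand_apply f d (shiftZ s y) (k - s) j (by rw [hv]; exact hj), hv]

/-! ### The substitution φ₁ and the run expansion, on sequences -/

noncomputable def Ephi : (ℤ → ABCD) → (ℤ → ABCD) := expand (phiW true) A

noncomputable def xOf (z : ℤ → ABCD) : ℤ → ℕ :=
  expand (fun a => List.replicate (lval a) (sval a)) 0 z

lemma getD_replicate {α : Type*} (n : ℕ) (a d : α) (j : ℕ) (h : j < n) :
    (List.replicate n a).getD j d = a := by
  induction n generalizing j with
  | zero => omega
  | succ m ih =>
    cases j with
    | zero => rfl
    | succ jj => exact ih jj (by omega)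

lemma xOf_apply (z : ℤ → ABCD) (k : ℤ) (j : ℕ) (hj : (j:ℤ) < lval (z k)) :
    xOf z (ulen z k + j) = sval (z k) := by
  rw [xOf, expand_apply _ _ _ _ _ hj, getD_replicate _ _ _ _ (by exact_mod_cast hj)]

lemma xOf_start (z : ℤ → ABCD) (k : ℤ) : xOf z (ulen z k) = sval (z k) := by
  have h := xOf_apply z k 0 (by have := lval_pos (z k); omega)
  simpa using h

lemma xOf_val (z : ℤ → ABCD) (i : ℤ) : xOf z i = sval (z (blockIdx z i)) := by
  obtain ⟨k, j, hj, rfl⟩ := block_decomp z i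
  rw [xOf_apply z k j hj, blockIdx_block z k j hj]

lemma Ephi_apply (z : ℤ → ABCD) (k : ℤ) (j : ℕ) (hj : (j:ℤ) < lval (z k)) :
    Ephi z (ulen z k + j) = (phiW true (z k)).getD j A := by
  rw [Ephi, expand_apply _ _ _ _ _ hj]

lemma lval_Ephi (w : ℤ → ABCD) (i : ℤ) : lval (Ephi w i) = xOf w i := by
  obtain ⟨k, j, hj, rfl⟩ := block_decomp w i
  rw [Ephi_apply w k j hj, xOf_apply w k j hj]
  have hj' : j < lval (w k) := by exact_mod_cast hj
  cases hv : w k <;> rw [hv] at hj' <;> simp only [lval] at hj' <;>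
    interval_cases j <;> rfl

/-! ### Alternation -/

lemma eq_B_or_D_of_sval {a : ABCD} (h : sval a = 3) : a = B ∨ a = D := by
  cases a <;> simp_all [sval]

lemma alternating_shiftZ {z : ℤ → ABCD} (h : Alternating z) (m : ℤ) :
    Alternating (shiftZ m z) := by
  intro n
  have := h (n + m)
  simp only [shiftZ_apply]
  have e : n + 1 + m = n + m + 1 := by ring
  rw [e]
  exact this

lemma phiW_first (a : ABCD) : sval ((phiW true a).getD 0 A) = 4 - sval a := by
  cases a <;> rfl

lemma phiW_last (a : ABCD) : sval ((phiW true a).getD (lval a - 1) A) = 4 - sval a := by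
  cases a <;> rfl

lemma phiW_inner (a : ABCD) (j : ℕ) (h : j + 1 < lval a) :
    sval ((phiW true a).getD j A) ≠ sval ((phiW true a).getD (j+1) A) := by
  cases a <;> simp only [lval] at h <;>
    first
      | omega
      | (have h2 : j ≤ 1 := by omega
         interval_cases j <;> decide)

lemma alternating_Ephi {z : ℤ → ABCD} (hz : Alternating z) : Alternating (Ephi z) := by
  intro n
  obtain ⟨k, j, hj, rfl⟩ := block_decomp z n
  rw [Ephi_apply z k j hj]
  rcases lt_or_eq_of_le (by omega : (j:ℤ) + 1 ≤ lval (z k)) with h | h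
  · have e : ulen z k + (j:ℤ) + 1 = ulen z k + ((j+1 : ℕ) : ℤ) := by push_cast; ring
    rw [e, Ephi_apply z k (j+1) (by push_cast; omega)]
    exact phiW_inner (z k) j (by exact_mod_cast h)
  · have e : ulen z k + (j:ℤ) + 1 = ulen z (k+1) + ((0:ℕ) : ℤ) := by
      rw [ulen_succ]; push_cast; omega
    rw [e, Ephi_apply z (k+1) 0 (by have := lval_pos (z (k+1)); omega)]
    have hjj : j = lval (z k) - 1 := by omega
    rw [hjj, phiW_last (z k), phiW_first (z (k+1))]
    have h1 := sval_cases (z k); have h2 := sval_cases (z (k+1)); have h3 := hz k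
    omega

/-! ### D-freeness -/

lemma phiW_ne_D {a : ABCD} (ha : a ≠ D) {j : ℕ} (hj : j < lval a) :
    (phiW true a).getD j A ≠ D := by
  cases a <;> simp only [lval] at hj <;>
    first
      | exact absurd rfl ha
      | (interval_cases j <;> decide)

lemma Ephi_ne_D {z : ℤ → ABCD} (hz : ∀ i, z i ≠ D) (i : ℤ) : Ephi z i ≠ D := by
  obtain ⟨k, j, hj, rfl⟩ := block_decomp z i
  rw [Ephi_apply z k j hj]
  exact phiW_ne_D (hz k) (by exact_mod_cast hj)

/-! ### Type 1 occurrences -/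

lemma exists_C {z : ℤ → ABCD} (hz : Alternating z) : ∃ i, Ephi z i = C := by
  have h0 := hz 0
  have hBD : ∃ k, z k = B ∨ z k = D := by
    rcases sval_cases (z 0) with h | h
    · refine ⟨1, eq_B_or_D_of_sval ?_⟩
      rcases sval_cases (z (0+1)) with h' | h'
      · exact absurd (h.trans h'.symm) h0
      · simpa using h'
    · exact ⟨0, eq_B_or_D_of_sval h⟩
  obtain ⟨k, hk⟩ := hBD
  refine ⟨ulen z k, ?_⟩
  have h := Ephi_apply z k 0 (by have := lval_pos (z k); omega)
  simp only [Nat.cast_zero, add_zero] at h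
  rw [h]
  rcases hk with hk | hk <;> rw [hk] <;> rfl

lemma hasType1_shiftZ {z : ℤ → ABCD} (m : ℤ) (h : HasType1 z) : HasType1 (shiftZ m z) := by
  obtain ⟨i, hi⟩ := h
  refine ⟨i - m, ?_⟩
  simp only [shiftZ_apply]
  have e1 : i - m + m = i := by ring
  have e2 : i - m + 1 + m = i + 1 := by ring
  have e3 : i - m + 2 + m = i + 2 := by ring
  rw [e1, e2, e3]
  exact hi

lemma hasType1_EE {z : ℤ → ABCD} (hz : Alternating z) : HasType1 (Ephi (Ephi z)) := by
  obtain ⟨s, hs⟩ := exists_C (z := z) hz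
  set E := Ephi z with hE
  have h0 := Ephi_apply E s 0 (by have := lval_pos (E s); omega)
  have h1 := Ephi_apply E s 1 (by rw [hs]; simp [lval]
)
  have h2 := Ephi_apply E s 2 (by rw [hs]; simp [lval])
  rw [hs] at h0 h1 h2
  refine ⟨ulen E s, Or.inl ⟨?_, ?_, ?_⟩⟩
  · simpa [phiW] using h0
  · have e : ulen E s + 1 = ulen E s + ((1:ℕ):ℤ) := by push_cast; ring
    rw [e, h1]; rfl
  · have e : ulen E s + 2 = ulen E s + ((2:ℕ):ℤ) := by push_cast; ring
    rw [e, h2]; rfl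

/-! ### Uniqueness of run structures -/

lemma strictMono_int_add {t : ℤ → ℤ} (h : StrictMono t) (k : ℤ) (n : ℕ) :
    t k + n ≤ t (k + n) := by
  induction n with
  | zero => simp
  | succ m ih =>
    have h1 : t (k + m) < t (k + m + 1) := h (by omega)
    have e : k + ((m+1 : ℕ) : ℤ) = k + m + 1 := by push_cast; ring
    rw [e]
    push_cast
    omega

lemma strictMono_int_le_add {t : ℤ → ℤ} (h : StrictMono t) {a b : ℤ} (hab : a ≤ b) :
    t a + (b - a) ≤ t b := by
  have := strictMono_int_add h a (b - a).toNat
  have e : a + (((b - a).toNat : ℤ)) = b := by omega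
  rw [e] at this
  omega

lemma rs_cover {x : ℤ → ℕ} (r : RunStructure x) (i : ℤ) :
    ∃ k, r.t k ≤ i ∧ i < r.t (k + 1) := by
  obtain ⟨ub, hub, hmax⟩ := Int.exists_greatest_of_bdd
    (P := fun k => r.t k ≤ i)
    ⟨(i - r.t 0).natAbs, by
      intro z hz
      by_contra hc
      push_neg at hc
      have h0 : (0:ℤ) ≤ z := by omega
      have := strictMono_int_le_add r.mono h0
      omega⟩
    ⟨-((r.t 0 - i).natAbs), by
      have h0 : (-((r.t 0 - i).natAbs) : ℤ) ≤ 0 := by omega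
      have := strictMono_int_le_add r.mono h0
      omega⟩
  refine ⟨ub, hub, ?_⟩
  by_contra hc
  push_neg at hc
  have := hmax (ub + 1) hc
  omega

lemma rs_break {x : ℤ → ℕ} (r : RunStructure x) (i : ℤ) :
    x (i - 1) ≠ x i ↔ ∃ k, i = r.t k := by
  constructor
  · intro h
    obtain ⟨k, h1, h2⟩ := rs_cover r i
    refine ⟨k, ?_⟩
    by_contra hne
    have hlt : r.t k < i := by omega
    have e1 : x (i - 1) = x (r.t k) := r.const k (i-1) (by omega) (by omega)
    have e2 : x i = x (r.t k) := r.const k i h1 h2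
    rw [e1, e2] at h
    exact h rfl
  · rintro ⟨k, rfl⟩
    have h1 : r.t (k - 1) ≤ r.t k - 1 := by
      have := r.mono (show k - 1 < k by omega); omega
    have h2 : r.t k - 1 < r.t (k - 1 + 1) := by
      have e : k - 1 + 1 = k := by ring
      rw [e]; omega
    have e1 : x (r.t k - 1) = x (r.t (k - 1)) := r.const (k-1) _ h1 h2
    have e2 : x (r.t (k - 1 + 1)) ≠ x (r.t (k - 1)) := r.alt (k - 1)
    have e : k - 1 + 1 = k := by ring
    rw [e] at e2
    rw [e1]
    exact fun hh => e2 hh.symm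

lemma rs_unique {x : ℤ → ℕ} (r1 r2 : RunStructure x) : r1.t = r2.t := by
  have key : ∀ k, ∃ j, r1.t k = r2.t j := fun k =>
    (rs_break r2 (r1.t k)).1 ((rs_break r1 (r1.t k)).2 ⟨k, rfl⟩)
  choose f hf using key
  have hmono : StrictMono f := by
    intro a b hab
    have h := r1.mono hab
    rw [hf a, hf b] at h
    exact r2.mono.lt_iff_lt.1 h
  have hsurj : ∀ j, ∃ k, f k = j := by
    intro j
    obtain ⟨k, hk⟩ := (rs_break r1 (r2.t j)).1 ((rs_break r2 (r2.t j)).2 ⟨j, rfl⟩)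
    refine ⟨k, r2.mono.injective ?_⟩
    rw [← hf k, ← hk]
  have hstep : ∀ k, f (k + 1) = f k + 1 := by
    intro k
    have h1 : f k < f (k + 1) := hmono (by omega)
    by_contra hne
    obtain ⟨k', hk'⟩ := hsurj (f k + 1)
    have l1 : k < k' := hmono.lt_iff_lt.1 (by omega)
    have l2 : k' < k + 1 := hmono.lt_iff_lt.1 (by omega)
    omega
  have hf0 : f 0 = 0 := by
    have e1 : r2.t (f 0) ≤ 0 := by rw [← hf 0]; exact r1.start_nonpos
    have hs := hstep 0
    norm_num at hs
    have e2 : 0 < r2.t (f 0 + 1) := by rw [← hs, ← hf 1]; exact r1.start_pos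
    by_contra h
    rcases lt_or_gt_of_ne h with h' | h'
    · have : f 0 + 1 ≤ 0 := by omega
      have := r2.mono.monotone this
      have := r2.start_nonpos
      omega
    · have : (1:ℤ) ≤ f 0 := by omega
      have := r2.mono.monotone this
      have := r2.start_pos
      omega
  have flin : ∀ k, f k = k := by
    intro k
    induction k using Int.induction_on with
    | zero => exact hf0
    | succ n ih => rw [hstep]; omega
    | pred n ih =>
      have h := hstep (-(n:ℤ) - 1)
      have e : (-(n:ℤ) - 1) + 1 = -(n:ℤ) := by ring
      rw [e] at h
      omega
  funext k
  rw [hf k, flin k]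

/-! ### Computation of recode and delta on expanded sequences -/

noncomputable def mkRunShift (z : ℤ → ABCD) (hz : Alternating z) (m : ℤ) :
    RunStructure (shiftZ m (xOf z)) where
  t := fun k => ulen z (k + blockIdx z m) - m
  mono := by
    intro a b hab
    dsimp only
    have : a + blockIdx z m < b + blockIdx z m := by omega
    have := ulen_strictMono z this
    omega
  start_nonpos := by
    have := (blockIdx_spec z m).1
    simp only [zero_add]
    omega
  start_pos := by
    have := (blockIdx_spec z m).2
    have e : (1:ℤ) + blockIdx z m = blockIdx z m + 1 := by ring
    rw [e]
    omega
  const := by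
    intro k i h1 h2
    have e : k + 1 + blockIdx z m = (k + blockIdx z m) + 1 := by ring
    rw [e, ulen_succ] at h2
    rw [shiftZ_apply, shiftZ_apply]
    have d1 : i + m = ulen z (k + blockIdx z m) + ((i + m - ulen z (k + blockIdx z m)).toNat : ℤ) := by
      omega
    have d2 : ulen z (k + blockIdx z m) - m + m = ulen z (k + blockIdx z m) := by ring
    rw [d2, xOf_start, d1, xOf_apply z _ _ (by omega)]
  alt := by
    intro k
    rw [shiftZ_apply, shiftZ_apply]
    have d1 : ulen z (k + blockIdx z m) - m + m = ulen z (k + blockIdx z m) := by ring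
    have d2 : ulen z (k + 1 + blockIdx z m) - m + m = ulen z ((k + blockIdx z m) + 1) := by
      have : k + 1 + blockIdx z m = (k + blockIdx z m) + 1 := by ring
      rw [this]; ring
    rw [d1, d2, xOf_start, xOf_start]
    exact fun hh => hz (k + blockIdx z m) hh.symm

lemma isRecoding_shift (z : ℤ → ABCD) (hz : Alternating z) (m : ℤ) :
    IsRecoding (shiftZ m (xOf z)) (shiftZ (blockIdx z m) z) := by
  refine ⟨mkRunShift z hz m, fun k => ⟨?_, ?_⟩⟩
  · show (shiftZ m (xOf z)) (ulen z (k + blockIdx z m) - m) = _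
    rw [shiftZ_apply]
    have d : ulen z (k + blockIdx z m) - m + m = ulen z (k + blockIdx z m) := by ring
    rw [d, xOf_start, shiftZ_apply]
  · show ulen z (k + 1 + blockIdx z m) - m - (ulen z (k + blockIdx z m) - m) = _
    have e : k + 1 + blockIdx z m = (k + blockIdx z m) + 1 := by ring
    rw [e, ulen_succ, shiftZ_apply]
    ring

lemma isDelta_shift (z : ℤ → ABCD) (hz : Alternating z) (m : ℤ) :
    IsDelta (shiftZ m (xOf z)) (fun n => lval (z (n + blockIdx z m))) := by
  refine ⟨mkRunShift z hz m, fun k => ?_⟩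
  show _ = ulen z (k + 1 + blockIdx z m) - m - (ulen z (k + blockIdx z m) - m)
  have e : k + 1 + blockIdx z m = (k + blockIdx z m) + 1 := by ring
  rw [e, ulen_succ]
  ring

lemma recode_eq_of {x : ℤ → ℕ} {y : ℤ → ABCD} (h : IsRecoding x y) : recode x = y := by
  rw [recode, dif_pos ⟨y, h⟩]
  generalize_proofs hex
  obtain ⟨r1, h1⟩ := hex.choose_spec
  obtain ⟨r2, h2⟩ := h
  have ht := rs_unique r1 r2
  funext k
  apply letter_ext
  · rw [← (h1 k).1, ← (h2 k).1, ht]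
  · have e1 := (h1 k).2
    have e2 := (h2 k).2
    rw [ht] at e1
    rw [e2] at e1
    exact_mod_cast e1.symm
lemma delta_eq_of {x d : ℤ → ℕ} (h : IsDelta x d) : delta x = d := by
  rw [delta, dif_pos ⟨d, h⟩]
  generalize_proofs hex
  obtain ⟨r1, h1⟩ := hex.choose_spec
  obtain ⟨r2, h2⟩ := h
  have ht := rs_unique r1 r2
  funext k
  have e1 := h1 k
  have e2 := h2 k
  rw [ht] at e1
  rw [← e2] at e1
  exact_mod_cast e1

lemma recode_shift_xOf (z : ℤ → ABCD) (hz : Alternating z) (m : ℤ) :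
    recode (shiftZ m (xOf z)) = shiftZ (blockIdx z m) z :=
  recode_eq_of (isRecoding_shift z hz m)

lemma delta_shift_xOf (z : ℤ → ABCD) (hz : Alternating z) (m : ℤ) :
    delta (shiftZ m (xOf z)) = fun n => lval (z (n + blockIdx z m)) :=
  delta_eq_of (isDelta_shift z hz m)

/-- The key self-similarity step. -/
lemma delta_step (w : ℤ → ABCD) (hw : Alternating w) (m : ℤ) :
    delta (shiftZ m (xOf (Ephi w))) = shiftZ (blockIdx (Ephi w) m) (xOf w) := by
  rw [delta_shift_xOf (Ephi w) (alternating_Ephi hw) m]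
  funext n
  rw [shiftZ_apply, ← lval_Ephi]

/-! ### Good sequences and membership in `Y` -/

def Good (z : ℤ → ABCD) : Prop :=
  ∀ n : ℕ, ∃ (m : ℤ) (v : ℤ → ABCD), Alternating v ∧ z = shiftZ m (Ephi^[n] v)

lemma alternating_iter (n : ℕ) {v : ℤ → ABCD} (hv : Alternating v) :
    Alternating (Ephi^[n] v) := by
  induction n with
  | zero => simpa using hv
  | succ n ih => rw [Function.iterate_succ_apply']; exact alternating_Ephi ih

lemma good_alternating {z : ℤ → ABCD} (hz : Good z) : Alternating z := by
  obtain ⟨m, v, hv, rfl⟩ := hz 0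
  exact alternating_shiftZ (by simpa using hv) m

lemma blockIdx_zero (z : ℤ → ABCD) : blockIdx z 0 = 0 := by
  apply blockIdx_unique
  · rw [ulen_zero]
  · rw [ulen_succ, ulen_zero]
    have := lval_pos (z 0)
    omega

lemma xOf_shift (y : ℤ → ABCD) (s : ℤ) :
    xOf (shiftZ s y) = shiftZ (ulen y s) (xOf y) :=
  expand_shift _ _ y s

lemma recode_xOf {z : ℤ → ABCD} (hz : Alternating z) : recode (xOf z) = z := by
  have h := recode_shift_xOf z hz 0
  rw [shiftZ_zero, blockIdx_zero, shiftZ_zero] at h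
  exact h

lemma delta_iter (n : ℕ) : ∀ (m : ℤ) (w : ℤ → ABCD), Alternating w →
    ∃ K, delta^[n] (shiftZ m (xOf (Ephi^[n] w))) = shiftZ K (xOf w) := by
  induction n with
  | zero => intro m w _; exact ⟨m, by simp⟩
  | succ n ih =>
    intro m w hw
    have hdec : Ephi^[n+1] w = Ephi (Ephi^[n] w) := Function.iterate_succ_apply' Ephi n w
    have hstep := delta_step (Ephi^[n] w) (alternating_iter n hw) m
    obtain ⟨K, hK⟩ := ih (blockIdx (Ephi (Ephi^[n] w)) m) w hw
    refine ⟨K, ?_⟩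
    rw [Function.iterate_succ_apply, hdec, hstep, hK]

lemma good_delta {z : ℤ → ABCD} (hz : Good z) (n : ℕ) :
    ∃ (K : ℤ) (v : ℤ → ABCD), Alternating v ∧
      delta^[n] (xOf z) = shiftZ K (xOf (Ephi (Ephi v))) := by
  obtain ⟨m, v, hv, hzeq⟩ := hz (n + 2)
  have h2 : Ephi^[n+2] v = Ephi^[n] (Ephi (Ephi v)) := by
    rw [show n + 2 = n + 1 + 1 from rfl, Function.iterate_succ_apply,
      Function.iterate_succ_apply]
  rw [h2] at hzeq
  have hx : xOf z = shiftZ (ulen (Ephi^[n] (Ephi (Ephi v))) m) (xOf (Ephi^[n] (Ephi (Ephi v)))) := by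
    rw [hzeq, xOf_shift]
  obtain ⟨K, hK⟩ := delta_iter n (ulen (Ephi^[n] (Ephi (Ephi v))) m) (Ephi (Ephi v))
    (alternating_Ephi (alternating_Ephi hv))
  refine ⟨K, v, hv, ?_⟩
  rw [hx, hK]

lemma good_mem_Yset {z : ℤ → ABCD} (hz : Good z) : z ∈ Yset (fun _ => true) := by
  have hzalt : Alternating z := good_alternating hz
  refine ⟨xOf z, ⟨?_, ?_⟩, recode_xOf hzalt⟩
  · intro k n
    obtain ⟨K, v, hv, heq⟩ := good_delta hz k
    rw [heq, shiftZ_apply, xOf_val]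
    exact sval_cases _
  · funext n
    obtain ⟨K, v, hv, heq⟩ := good_delta hz n
    show typeOf (recode (delta^[n] (xOf z))) = true
    rw [heq, recode_shift_xOf _ (alternating_Ephi (alternating_Ephi hv)) K, typeOf]
    exact decide_eq_true (hasType1_shiftZ _ (hasType1_EE hv))

/-! ### Word-level substitution -/

def bindphi (w : List ABCD) : List ABCD := w.flatMap (phiW true)

lemma bindphi_nil : bindphi [] = [] := rfl
lemma bindphi_cons (a : ABCD) (t : List ABCD) :
    bindphi (a :: t) = phiW true a ++ bindphi t := rfl
lemma bindphi_append (u v : List ABCD) :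
    bindphi (u ++ v) = bindphi u ++ bindphi v := List.flatMap_append

lemma length_bindphi_ge (w : List ABCD) : w.length ≤ (bindphi w).length := by
  induction w with
  | nil => simp [bindphi]
  | cons a t ih =>
    rw [bindphi_cons]
    have h1 : 1 ≤ (phiW true a).length := by rw [phiW_length]; exact lval_pos a
    simp only [List.length_append, List.length_cons]
    omega

/-- Occurrence of a finite word in a bi-infinite sequence. -/
def OccAt (w : List ABCD) (y : ℤ → ABCD) (s : ℤ) : Prop :=
  ∀ j : ℕ, j < w.length → y (s + j) = w.getD j A

lemma occAt_shift {w : List ABCD} {y : ℤ → ABCD} {s : ℤ} (h : OccAt w y s) (m : ℤ) :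
    OccAt w (shiftZ m y) (s - m) := by
  intro j hj
  rw [shiftZ_apply]
  have e : s - m + j + m = s + j := by ring
  rw [e]
  exact h j hj

lemma ulen_add_nat (y : ℤ → ABCD) (s : ℤ) (n : ℕ) :
    ulen y (s + n) = ulen y s + ∑ j ∈ Finset.range n, (lval (y (s + j)) : ℤ) := by
  induction n with
  | zero => simp
  | succ m ih =>
    have e : s + ((m + 1 : ℕ) : ℤ) = (s + m) + 1 := by push_cast; ring
    rw [e, ulen_succ, ih, Finset.sum_range_succ]
    push_cast
    ring

lemma length_bindphi_sum (w : List ABCD) :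
    ((bindphi w).length : ℤ) = ∑ j ∈ Finset.range w.length, (lval (w.getD j A) : ℤ) := by
  induction w with
  | nil => simp [bindphi]
  | cons a t ih =>
    rw [bindphi_cons]
    simp only [List.length_append, List.length_cons, phiW_length]
    rw [Finset.sum_range_succ']
    simp only [List.getD_cons_succ, List.getD_cons_zero]
    push_cast
    rw [← ih]
    push_cast
    ring

lemma occ_ulen {w : List ABCD} {y : ℤ → ABCD} {s : ℤ} (h : OccAt w y s) :
    ulen y (s + w.length) = ulen y s + (bindphi w).length := by
  rw [ulen_add_nat, length_bindphi_sum]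
  congr 1
  apply Finset.sum_congr rfl
  intro j hj
  rw [h j (Finset.mem_range.1 hj)]

lemma occ_ulen_neg {w : List ABCD} {y : ℤ → ABCD} (h : OccAt w y (-(w.length : ℤ))) :
    ulen y (-(w.length : ℤ)) = -((bindphi w).length : ℤ) := by
  have := occ_ulen h
  rw [show -(w.length : ℤ) + w.length = 0 by ring, ulen_zero] at this
  omega

/-! ### Occurrences map through the substitution -/

lemma occ_Ephi_zero : ∀ (w : List ABCD) (y : ℤ → ABCD), OccAt w y 0 →
    OccAt (bindphi w) (Ephi y) 0 := by
  intro w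
  induction w with
  | nil => intro y _ j hj; simp [bindphi] at hj
  | cons a t ih =>
    intro y hocc i hi
    have ha : y 0 = a := by
      have := hocc 0 (by simp)
      simpa using this
    rw [bindphi_cons] at hi ⊢
    simp only [List.length_append, phiW_length] at hi
    by_cases hcase : i < lval a
    · have hE := Ephi_apply y 0 i (by rw [ha]; exact_mod_cast hcase)
      rw [ulen_zero, zero_add] at hE
      rw [zero_add, hE, ha, List.getD_append _ _ _ _ (by rw [phiW_length]; exact hcase)]
    · push_neg at hcase
      have htail : OccAt t (shiftZ 1 y) 0 := by
        intro j hj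
        have := hocc (j + 1) (by simp; omega)
        rw [shiftZ_apply]
        have e : (0:ℤ) + j + 1 = 0 + ((j + 1 : ℕ) : ℤ) := by push_cast; ring
        rw [e, this]
        simp
      have hE := ih (shiftZ 1 y) htail (i - lval a) (by
        have := List.length_flatMap (l := t) (f := phiW true)
        omega)
      have hsh : Ephi (shiftZ 1 y) = shiftZ (ulen y 1) (Ephi y) := expand_shift _ _ y 1
      have hu1 : ulen y 1 = lval a := by
        have := ulen_succ y 0
        rw [ulen_zero, ha] at this
        simpa using this
      rw [hsh, shiftZ_apply, hu1] at hE
      have e : (0:ℤ) + ((i - lval a : ℕ) : ℤ) + lval a = 0 + i := by push_cast; omega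
      rw [e] at hE
      rw [hE, List.getD_append_right _ _ _ _ (by rw [phiW_length]; exact hcase)]
      rw [phiW_length]

lemma occ_Ephi {w : List ABCD} {y : ℤ → ABCD} {s : ℤ} (h : OccAt w y s) :
    OccAt (bindphi w) (Ephi y) (ulen y s) := by
  have h0 : OccAt w (shiftZ s y) 0 := by
    have := occAt_shift h s
    simpa using this
  have hb := occ_Ephi_zero w _ h0
  intro j hj
  have hE := hb j hj
  rw [show Ephi (shiftZ s y) = shiftZ (ulen y s) (Ephi y) from expand_shift _ _ y s,
    shiftZ_apply] at hE
  have e : ulen y s + j = 0 + j + ulen y s := by ring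
  rw [e]
  exact hE

/-! ### Alternating words, and extension to bi-infinite sequences -/

def AltW (w : List ABCD) : Prop :=
  ∀ j : ℕ, j + 1 < w.length → sval (w.getD j A) ≠ sval (w.getD (j+1) A)

def flipL : ABCD → ABCD
  | A => B
  | B => A
  | C => B
  | D => A

lemma sval_flipL (a : ABCD) : sval (flipL a) = 4 - sval a := by cases a <;> rfl

noncomputable def extSeq (w : List ABCD) : ℤ → ABCD := fun i =>
  if i < 0 then (if i % 2 = 0 then w.getD 0 A else flipL (w.getD 0 A))
  else if i < (w.length : ℤ) then w.getD i.toNat A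
  else (if (i - w.length) % 2 = 0 then flipL (w.getD (w.length - 1) A)
        else w.getD (w.length - 1) A)

lemma ext_left {w : List ABCD} {i : ℤ} (h : i < 0) :
    extSeq w i = if i % 2 = 0 then w.getD 0 A else flipL (w.getD 0 A) := by
  simp only [extSeq, if_pos h]

lemma ext_in {w : List ABCD} {i : ℤ} (h0 : 0 ≤ i) (h1 : i < (w.length : ℤ)) :
    extSeq w i = w.getD i.toNat A := by
  simp only [extSeq]
  rw [if_neg (by omega), if_pos h1]

lemma ext_right {w : List ABCD} {i : ℤ} (h : (w.length : ℤ) ≤ i) :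
    extSeq w i = if (i - w.length) % 2 = 0 then flipL (w.getD (w.length - 1) A)
        else w.getD (w.length - 1) A := by
  simp only [extSeq]
  rw [if_neg (by omega), if_neg (by omega)]

lemma sval_ne_flipL (a : ABCD) : sval a ≠ sval (flipL a) := by
  have h1 := sval_cases a
  rw [sval_flipL]
  omega

lemma alternating_extSeq {w : List ABCD} (hw : AltW w) (hne : w ≠ []) :
    Alternating (extSeq w) := by
  have hlen : 1 ≤ w.length := by
    cases w with
    | nil => exact absurd rfl hne
    | cons a t => simp
  intro n
  rcases lt_trichotomy (n + 1) 0 with hc | hc | hc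
  · -- both in left filler
    rw [ext_left (by omega), ext_left hc]
    rcases Int.emod_two_eq_zero_or_one n with hp | hp
    · rw [if_pos hp, if_neg (by omega)]
      exact sval_ne_flipL _
    · rw [if_neg (by omega), if_pos (by omega)]
      exact (sval_ne_flipL _).symm
  · -- n = -1
    have hn : n = -1 := by omega
    subst hn
    rw [ext_left (by omega), if_neg (by omega)]
    norm_num
    rw [ext_in (by omega) (by exact_mod_cast hlen)]
    norm_num
    exact (sval_ne_flipL _).symm
  · -- n ≥ 0
    rcases lt_trichotomy (n + 1) (w.length : ℤ) with hd | hd | hd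
    · -- both inside the word
      rw [ext_in (by omega) (by omega), ext_in (by omega) hd]
      have e : (n + 1).toNat = n.toNat + 1 := by omega
      rw [e]
      exact hw n.toNat (by omega)
    · -- n + 1 = length
      rw [ext_in (by omega) (by omega), ext_right (by omega)]
      rw [if_pos (by omega)]
      have e : n.toNat = w.length - 1 := by omega
      rw [e]
      exact sval_ne_flipL _
    · -- both in right filler
      rw [ext_right (by omega), ext_right (by omega)]
      rcases Int.emod_two_eq_zero_or_one (n - w.length) with hp | hp
      · rw [if_pos hp, if_neg (by omega)]
        exact (sval_ne_flipL _).symm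
      · rw [if_neg (by omega), if_pos (by omega)]
        exact sval_ne_flipL _

lemma altW_bindphi {w : List ABCD} (hw : AltW w) : AltW (bindphi w) := by
  rcases eq_or_ne w [] with rfl | hne
  · intro j hj; simp [bindphi] at hj
  · have halt : Alternating (extSeq w) := alternating_extSeq hw hne
    have hocc : OccAt w (extSeq w) 0 := by
      intro j hj
      rw [zero_add, ext_in (by omega) (by exact_mod_cast hj)]
      simp
    have hE := occ_Ephi_zero w _ hocc
    intro j hj
    have h1 := hE j (by omega)
    have h2 := hE (j+1) hj
    have h3 := alternating_Ephi halt j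
    rw [zero_add] at h1 h2
    have e : ((j + 1 : ℕ) : ℤ) = (j:ℤ) + 1 := by push_cast; ring
    rw [e] at h2
    rw [h1, h2] at h3
    exact h3

/-! ### The anchored fixed point `q` -/

def sqw (w : List ABCD) : List ABCD := bindphi (bindphi w)

lemma sqw_append (u v : List ABCD) : sqw (u ++ v) = sqw u ++ sqw v := by
  rw [sqw, bindphi_append, bindphi_append, sqw, sqw]

lemma sqw_cons (a : ABCD) (t : List ABCD) : sqw (a :: t) = sqw [a] ++ sqw t := by
  rw [show a :: t = [a] ++ t from rfl, sqw_append]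

lemma sqw_len_ge (w : List ABCD) : w.length ≤ (sqw w).length :=
  le_trans (length_bindphi_ge w) (length_bindphi_ge _)

lemma getD_take (l : List ABCD) (n j : ℕ) (d : ABCD) (h : j < n) :
    (l.take n).getD j d = l.getD j d := by
  rcases lt_or_ge j l.length with hl | hl
  · rw [List.getD_eq_getElem _ _ (by simp; omega), List.getD_eq_getElem _ _ hl,
      List.getElem_take]
  · rw [List.getD_eq_default _ _ (by simp; omega), List.getD_eq_default _ _ hl]

def cw : ℕ → List ABCD
  | 0 => [D]
  | n+1 => sqw (cw n)

def anch : ℕ → ℕ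
  | 0 => 0
  | n+1 => (sqw ((cw n).take (anch n))).length + 4

lemma sqw_D : sqw [D] = [B,A,B,C,D,C,B,A,B] := rfl

lemma cw_inv : ∀ n : ℕ, (cw n).getD (anch n) A = D ∧ 4*n ≤ anch n ∧
    anch n + 4*n < (cw n).length := by
  intro n
  induction n with
  | zero => refine ⟨rfl, by omega, by simp [cw, anch]⟩
  | succ n ih =>
    obtain ⟨hD, hlo, hhi⟩ := ih
    set a := anch n with ha
    set L := cw n with hL
    have haL : a < L.length := by omega
    have hdrop : L.drop a = D :: L.drop (a+1) := by
      have h1 : L.drop a = L[a] :: L.drop (a+1) := List.drop_eq_getElem_cons haL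
      have h2 : L[a] = D := by rw [← List.getD_eq_getElem L A haL]; exact hD
      rw [h1, h2]
    have hsplit : cw (n+1) = sqw (L.take a) ++ (sqw [D] ++ sqw (L.drop (a+1))) := by
      show sqw L = _
      conv_lhs => rw [← List.take_append_drop a L]
      rw [sqw_append, hdrop, sqw_cons]
    have hanch : anch (n+1) = (sqw (L.take a)).length + 4 := rfl
    have htklen : (L.take a).length = a := by simp; omega
    constructor
    · rw [hsplit, hanch, List.getD_append_right _ _ _ _ (by omega)]
      have e : (sqw (L.take a)).length + 4 - (sqw (L.take a)).length = 4 := by omega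
      rw [e, List.getD_append _ _ _ _ (by rw [sqw_D]; simp)]
      rfl
    constructor
    · have := sqw_len_ge (L.take a)
      omega
    · have hlen : (cw (n+1)).length =
          (sqw (L.take a)).length + 9 + (sqw (L.drop (a+1))).length := by
        rw [hsplit]
        simp [sqw_D]
        omega
      have h9 : (L.drop (a+1)).length ≤ (sqw (L.drop (a+1))).length := sqw_len_ge _
      have hdl : (L.drop (a+1)).length = L.length - (a+1) := by simp
      omega

lemma anch_lt_len (n : ℕ) : anch n < (cw n).length := by
  have := cw_inv n; omega

lemma cw_infix : ∀ n : ℕ, ∃ x z : List ABCD,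
    cw (n+1) = x ++ cw n ++ z ∧ anch (n+1) = x.length + anch n := by
  intro n
  induction n with
  | zero =>
    refine ⟨[B,A,B,C], [C,B,A,B], ?_, ?_⟩
    · rfl
    · rfl
  | succ n ih =>
    obtain ⟨x, z, hx, ha⟩ := ih
    refine ⟨sqw x, sqw z, ?_, ?_⟩
    · calc cw (n+2) = sqw (cw (n+1)) := rfl
        _ = sqw ((x ++ cw n) ++ z) := by rw [← hx]
        _ = sqw (x ++ cw n) ++ sqw z := sqw_append _ _
        _ = sqw x ++ sqw (cw n) ++ sqw z := by rw [sqw_append]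
        _ = sqw x ++ cw (n+1) ++ sqw z := rfl
    · have htk : (cw (n+1)).take (anch (n+1)) = x ++ (cw n).take (anch n) := by
        rw [hx, ha, List.append_assoc, List.take_append,
          List.take_of_length_le (by omega), Nat.add_sub_cancel_left,
          List.take_append_of_le_length (le_of_lt (anch_lt_len n))]
      calc anch (n+2) = (sqw ((cw (n+1)).take (anch (n+1)))).length + 4 := rfl
        _ = (sqw x ++ sqw ((cw n).take (anch n))).length + 4 := by rw [htk, sqw_append]
        _ = (sqw x).length + ((sqw ((cw n).take (anch n))).length + 4) := by
            simp only [List.length_append]; omega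
        _ = (sqw x).length + anch (n+1) := rfl

lemma anch_mono (n : ℕ) : anch n ≤ anch (n+1) := by
  obtain ⟨x, z, _, ha⟩ := cw_infix n
  omega

lemma cw_stab (n : ℕ) (t : ℕ) (ht : t < (cw n).length) :
    (cw (n+1)).getD ((anch (n+1) - anch n) + t) A = (cw n).getD t A := by
  obtain ⟨x, z, hx, ha⟩ := cw_infix n
  have e : anch (n+1) - anch n = x.length := by omega
  rw [e, hx, List.append_assoc, List.getD_append_right _ _ _ _ (by omega)]
  have e2 : x.length + t - x.length = t := by omega
  rw [e2, List.getD_append _ _ _ _ ht]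

lemma cw_stable : ∀ (n m : ℕ), n ≤ m → ∀ (t : ℕ), t < (cw n).length →
    anch n ≤ anch m ∧ (anch m - anch n) + t < (cw m).length ∧
    (cw m).getD ((anch m - anch n) + t) A = (cw n).getD t A := by
  intro n m hnm
  induction m with
  | zero =>
    have : n = 0 := by omega
    subst this
    intro t ht
    exact ⟨le_refl _, by simpa using ht, by simp⟩
  | succ m ih =>
    rcases Nat.lt_or_ge n (m+1) with hlt | hge
    · have hnm' : n ≤ m := by omega
      intro t ht
      obtain ⟨h1, h2, h3⟩ := ih hnm' t ht
      have h4 := cw_stab m ((anch m - anch n) + t) h2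
      have h5 := anch_mono m
      refine ⟨by omega, ?_, ?_⟩
      · have e : (anch (m+1) - anch n) + t =
          (anch (m+1) - anch m) + ((anch m - anch n) + t) := by omega
        rw [e]
        obtain ⟨x, z, hx, ha⟩ := cw_infix m
        have hxlen : (cw (m+1)).length = x.length + ((cw m).length + z.length) := by
          rw [hx]; simp
        omega
      · have e : (anch (m+1) - anch n) + t =
          (anch (m+1) - anch m) + ((anch m - anch n) + t) := by omega
        rw [e, h4, h3]
    · have : n = m + 1 := by omega
      subst this
      intro t ht
      exact ⟨le_refl _, by simpa using ht, by simp⟩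

noncomputable def qseq : ℤ → ABCD :=
  fun i => (cw (i.natAbs + 1)).getD (((anch (i.natAbs + 1) : ℤ) + i)).toNat A

lemma anch_margin (n : ℕ) : 4*n ≤ anch n ∧ anch n + 4*n < (cw n).length := by
  have := cw_inv n; omega

lemma qseq_eval (n : ℕ) (i : ℤ) (h0 : 0 ≤ (anch n : ℤ) + i)
    (h1 : (anch n : ℤ) + i < ((cw n).length : ℤ)) :
    qseq i = (cw n).getD ((anch n : ℤ) + i).toNat A := by
  set M := i.natAbs + 1 with hM
  have hMrange : 0 ≤ (anch M : ℤ) + i ∧ (anch M : ℤ) + i < ((cw M).length : ℤ) := by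
    have h := anch_margin M
    have hc1 : (4*M : ℤ) ≤ (anch M : ℤ) := by exact_mod_cast h.1
    have hc2 : (anch M : ℤ) + 4*M < ((cw M).length : ℤ) := by
      exact_mod_cast (by omega : anch M + 4*M < (cw M).length)
    have hMc : (M : ℤ) = (i.natAbs : ℤ) + 1 := by rw [hM]; push_cast; ring
    omega
  set N := max n M with hN
  have hstab1 := cw_stable n N (le_max_left _ _) ((anch n : ℤ) + i).toNat
    (by omega)
  have hstab2 := cw_stable M N (le_max_right _ _) ((anch M : ℤ) + i).toNat
    (by omega)
  obtain ⟨a1, b1, c1⟩ := hstab1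
  obtain ⟨a2, b2, c2⟩ := hstab2
  have e : (anch N - anch n) + ((anch n : ℤ) + i).toNat =
      (anch N - anch M) + ((anch M : ℤ) + i).toNat := by omega
  show (cw M).getD ((anch M : ℤ) + i).toNat A = _
  rw [← c2, ← e, c1]

lemma qseq_zero : qseq 0 = D := by
  have h := qseq_eval 0 0 (by simp [anch]) (by simp [anch, cw])
  simpa [anch, cw] using h

lemma altW_cw (n : ℕ) : AltW (cw n) := by
  induction n with
  | zero =>
    intro j hj
    simp [cw] at hj
  | succ n ih =>
    exact altW_bindphi (altW_bindphi ih)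

lemma alternating_qseq : Alternating qseq := by
  intro i
  set n := i.natAbs + 2 with hn
  have hm := anch_margin n
  have h0 : 0 ≤ (anch n : ℤ) + i ∧ (anch n : ℤ) + i + 1 < ((cw n).length : ℤ) := by
    have hc1 : (4*n : ℤ) ≤ (anch n : ℤ) := by exact_mod_cast hm.1
    have hc2 : ((anch n : ℤ)) + 4*n < ((cw n).length : ℤ) := by
      exact_mod_cast (by omega : anch n + 4*n < (cw n).length)
    have hnc : (n : ℤ) = (i.natAbs : ℤ) + 2 := by rw [hn]; push_cast; ring
    omega
  rw [qseq_eval n i h0.1 (by omega), qseq_eval n (i+1) (by omega) (by omega)]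
  have e : ((anch n : ℤ) + (i+1)).toNat = ((anch n : ℤ) + i).toNat + 1 := by omega
  rw [e]
  exact altW_cw n ((anch n : ℤ) + i).toNat (by omega)

lemma occ_cw (n : ℕ) : OccAt (cw n) qseq (-(anch n : ℤ)) := by
  intro j hj
  have h := qseq_eval n ((j : ℤ) - anch n) (by omega) (by omega)
  have e : -(anch n : ℤ) + j = (j : ℤ) - anch n := by ring
  rw [e, h]
  congr 1
  omega

/-! ### `q` is a shifted fixed point of the square substitution -/

lemma cw_succ_eq (n : ℕ) : cw (n+1) = bindphi (bindphi (cw n)) := rfl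

lemma qseq_fix : qseq = shiftZ 4 (Ephi (Ephi qseq)) := by
  funext i
  set n := i.natAbs with hn
  have h1 : OccAt (cw n) qseq (-(anch n : ℤ)) := occ_cw n
  set T := (cw n).take (anch n) with hT
  have hTlen : T.length = anch n := by
    rw [hT, List.length_take]
    have := anch_lt_len n
    omega
  have hsplit : bindphi (cw n) = bindphi T ++ bindphi ((cw n).drop (anch n)) := by
    rw [hT, ← bindphi_append, List.take_append_drop]
  have hTocc : OccAt T qseq (-(T.length : ℤ)) := by
    intro j hj
    rw [hTlen] at hj
    have hval := h1 j (by have := anch_lt_len n; omega)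
    have e : -(T.length : ℤ) + j = -(anch n : ℤ) + j := by rw [hTlen]
    rw [e, hval, hT, getD_take _ _ _ _ hj]
  have u1 : ulen qseq (-(anch n : ℤ)) = -((bindphi T).length : ℤ) := by
    have h := occ_ulen_neg hTocc
    rw [hTlen] at h
    exact h
  have h2 : OccAt (bindphi (cw n)) (Ephi qseq) (-((bindphi T).length : ℤ)) := by
    have h := occ_Ephi h1
    rw [u1] at h
    exact h
  have h2' : OccAt (bindphi T) (Ephi qseq) (-((bindphi T).length : ℤ)) := by
    intro j hj
    have hjlen : j < (bindphi (cw n)).length := by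
      rw [hsplit]
      simp only [List.length_append]
      omega
    have hv := h2 j hjlen
    rw [hv, hsplit, List.getD_append _ _ _ _ hj]
  have u2 : ulen (Ephi qseq) (-((bindphi T).length : ℤ)) =
      -((bindphi (bindphi T)).length : ℤ) := occ_ulen_neg h2'
  have h3 : OccAt (bindphi (bindphi (cw n))) (Ephi (Ephi qseq))
      (-((bindphi (bindphi T)).length : ℤ)) := by
    have h := occ_Ephi h2
    rw [u2] at h
    exact h
  have hanch : (anch (n+1) : ℤ) = ((bindphi (bindphi T)).length : ℤ) + 4 := by
    rw [show anch (n+1) = (sqw ((cw n).take (anch n))).length + 4 from rfl, ← hT]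
    push_cast
    rfl
  have hm := anch_margin (n+1)
  have hc1 : (4*(n+1) : ℤ) ≤ (anch (n+1) : ℤ) := by exact_mod_cast hm.1
  have hc2 : (anch (n+1) : ℤ) + 4*(n+1) < ((cw (n+1)).length : ℤ) := by
    exact_mod_cast (by omega : anch (n+1) + 4*(n+1) < (cw (n+1)).length)
  have hj0 : 0 ≤ (anch (n+1) : ℤ) + i := by
    have : (i.natAbs : ℤ) = (n : ℤ) := by rw [hn]
    omega
  have hj1 : (anch (n+1) : ℤ) + i < ((cw (n+1)).length : ℤ) := by
    have : (i.natAbs : ℤ) = (n : ℤ) := by rw [hn]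
    omega
  set j := ((anch (n+1) : ℤ) + i).toNat with hj
  have hjlen : j < (bindphi (bindphi (cw n))).length := by
    rw [← cw_succ_eq]
    omega
  have hval := h3 j hjlen
  have hpos : -((bindphi (bindphi T)).length : ℤ) + j = i + 4 := by omega
  rw [hpos] at hval
  rw [shiftZ_apply, hval, qseq_eval (n+1) i hj0 hj1]
  rfl

lemma Ephi_shift (y : ℤ → ABCD) (s : ℤ) :
    Ephi (shiftZ s y) = shiftZ (ulen y s) (Ephi y) := expand_shift _ _ y s

lemma iterate_Ephi_shift (k : ℕ) : ∀ (m : ℤ) (v : ℤ → ABCD),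
    ∃ d, Ephi^[k] (shiftZ m v) = shiftZ d (Ephi^[k] v) := by
  induction k with
  | zero => exact fun m v => ⟨m, by simp⟩
  | succ k ih =>
    intro m v
    obtain ⟨d, hd⟩ := ih m v
    refine ⟨ulen (Ephi^[k] v) d, ?_⟩
    rw [Function.iterate_succ_apply', hd, Ephi_shift, Function.iterate_succ_apply']

lemma Ephi_two (v : ℤ → ABCD) : Ephi^[2] v = Ephi (Ephi v) := by
  rw [Function.iterate_succ_apply, Function.iterate_one]

lemma good_qseq : Good qseq := by
  have hfix := qseq_fix
  have heven : ∀ jj : ℕ, ∃ m, qseq = shiftZ m (Ephi^[2*jj] qseq) := by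
    intro jj
    induction jj with
    | zero => exact ⟨0, by rw [shiftZ_zero]; simp⟩
    | succ jj ih =>
      obtain ⟨m, hm⟩ := ih
      obtain ⟨d, hd⟩ := iterate_Ephi_shift (2*jj) 4 (Ephi (Ephi qseq))
      refine ⟨m + d, ?_⟩
      have h1 : Ephi^[2*jj] (Ephi (Ephi qseq)) = Ephi^[2*(jj+1)] qseq := by
        rw [show 2*(jj+1) = 2*jj + 2 by ring, Function.iterate_add_apply, Ephi_two]
      calc qseq = shiftZ m (Ephi^[2*jj] qseq) := hm
        _ = shiftZ m (Ephi^[2*jj] (shiftZ 4 (Ephi (Ephi qseq)))) := by rw [← hfix]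
        _ = shiftZ m (shiftZ d (Ephi^[2*jj] (Ephi (Ephi qseq)))) := by rw [hd]
        _ = shiftZ (m + d) (Ephi^[2*jj] (Ephi (Ephi qseq))) := shiftZ_shiftZ _ _ _
        _ = shiftZ (m + d) (Ephi^[2*(jj+1)] qseq) := by rw [h1]
  intro nn
  rcases Nat.even_or_odd nn with ⟨jj, hjj⟩ | ⟨jj, hjj⟩
  · obtain ⟨m, hm⟩ := heven jj
    refine ⟨m, qseq, alternating_qseq, ?_⟩
    rw [show nn = 2*jj by omega]
    exact hm
  · obtain ⟨m, hm⟩ := heven (jj + 1)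
    refine ⟨m, Ephi qseq, alternating_Ephi alternating_qseq, ?_⟩
    rw [show nn = 2*jj + 1 by omega]
    have h1 : Ephi^[2*(jj+1)] qseq = Ephi^[2*jj+1] (Ephi qseq) := by
      rw [show 2*(jj+1) = (2*jj+1) + 1 by ring, Function.iterate_succ_apply]
    rw [← h1]
    exact hm

lemma qseq_mem_Yset : qseq ∈ Yset (fun _ => true) := good_mem_Yset good_qseq

/-! ### Topology: continuity of the substitution -/

instance : Fintype ABCD where
  elems := {A, B, C, D}
  complete := fun x => by cases x <;> decide

lemma ulen_local {y y' : ℤ → ABCD} {N : ℕ}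
    (h : ∀ j : ℤ, -(N:ℤ) ≤ j → j ≤ N → y j = y' j) :
    ∀ k : ℤ, -(N:ℤ) ≤ k → k ≤ (N:ℤ) + 1 → ulen y k = ulen y' k := by
  intro k h1 h2
  rw [ulen, ulen]
  congr 1
  · apply Finset.sum_congr rfl
    intro j hj
    rw [Finset.mem_range] at hj
    rw [h j (by omega) (by omega)]
  · apply Finset.sum_congr rfl
    intro j hj
    rw [Finset.mem_range] at hj
    rw [h (-1 - j) (by omega) (by omega)]

lemma Ephi_local {y y' : ℤ → ABCD} {i : ℤ}
    (h : ∀ j : ℤ, -((i.natAbs : ℤ)+1) ≤ j → j ≤ (i.natAbs : ℤ)+1 → y j = y' j) :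
    Ephi y i = Ephi y' i := by
  obtain ⟨s1, s2⟩ := blockIdx_spec y i
  set k := blockIdx y i with hk
  have hbound : -((i.natAbs : ℤ)) ≤ k ∧ k ≤ (i.natAbs : ℤ) := by
    rcases le_or_gt 0 i with hi | hi
    · constructor
      · by_contra hc
        push_neg at hc
        have hk1 : k + 1 ≤ 0 := by omega
        have := ulen_le_of_nonpos y hk1
        omega
      · by_contra hc
        push_neg at hc
        have hk0 : (0:ℤ) ≤ k := by omega
        have := le_ulen_of_nonneg y hk0
        omega
    · constructor
      · by_contra hc
        push_neg at hc
        have hk1 : k + 1 ≤ 0 := by omega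
        have := ulen_le_of_nonpos y hk1
        omega
      · by_contra hc
        push_neg at hc
        have hk0 : (0:ℤ) ≤ k := by omega
        have := le_ulen_of_nonneg y hk0
        omega
  have hu1 : ulen y k = ulen y' k :=
    ulen_local h k (by omega) (by omega)
  have hu2 : ulen y (k+1) = ulen y' (k+1) :=
    ulen_local h (k+1) (by omega) (by omega)
  have hval : y k = y' k := h k (by omega) (by omega)
  have hbk : blockIdx y' i = k := blockIdx_unique (by omega) (by omega)
  show expand _ _ y i = expand _ _ y' i
  rw [expand, expand, hbk, ← hk, ← hval, ← hu1]

lemma continuous_Ephi : Continuous Ephi := by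
  apply continuous_pi
  intro i
  have hopen : ∀ (c : ABCD), IsOpen ((fun y => Ephi y i) ⁻¹' {c}) := by
    intro c
    rw [isOpen_iff_mem_nhds]
    intro y hy
    set S : Set (ℤ → ABCD) :=
      (↑(Finset.Icc (-((i.natAbs : ℤ)+1)) ((i.natAbs : ℤ)+1)) : Set ℤ).pi
        (fun j => {y j}) with hS
    have hSopen : IsOpen S :=
      isOpen_set_pi (Finset.finite_toSet _) (fun a _ => isOpen_discrete _)
    have hyS : y ∈ S := by
      intro j _
      rfl
    apply Filter.mem_of_superset (hSopen.mem_nhds hyS)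
    intro y' hy'
    have : Ephi y' i = Ephi y i := by
      apply Ephi_local
      intro j hj1 hj2
      exact hy' j (Finset.mem_coe.2 (Finset.mem_Icc.2 ⟨by omega, by omega⟩))
    simp only [Set.mem_preimage, Set.mem_singleton_iff] at hy ⊢
    rw [this, hy]
  rw [continuous_def]
  intro U _
  have : (fun y => Ephi y i) ⁻¹' U = ⋃ c ∈ U, (fun y => Ephi y i) ⁻¹' {c} := by
    ext v; simp
  rw [this]
  exact isOpen_biUnion (fun c _ => hopen c)

lemma continuous_Ephi_iter (n : ℕ) : Continuous (Ephi^[n]) := by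
  induction n with
  | zero => simpa using continuous_id
  | succ n ih =>
    rw [Function.iterate_succ]
    exact ih.comp continuous_Ephi

lemma continuous_shiftZ (m : ℤ) : Continuous (shiftZ m : (ℤ → ABCD) → (ℤ → ABCD)) :=
  continuous_pi (fun n => continuous_apply (n + m))

/-! ### The subsystem `W` -/

def Vset : Set (ℤ → ABCD) := {v | Alternating v ∧ ∀ i, v i ≠ D}

lemma Vset_shift {v : ℤ → ABCD} (hv : v ∈ Vset) (m : ℤ) : shiftZ m v ∈ Vset :=
  ⟨alternating_shiftZ hv.1 m, fun i => hv.2 (i + m)⟩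

lemma Ephi_mem_Vset {v : ℤ → ABCD} (hv : v ∈ Vset) : Ephi v ∈ Vset :=
  ⟨alternating_Ephi hv.1, Ephi_ne_D hv.2⟩

lemma isClosed_Vset : IsClosed Vset := by
  have h1 : IsClosed {v : ℤ → ABCD | Alternating v} := by
    have he : {v : ℤ → ABCD | Alternating v} =
        ⋂ nn : ℤ, {v : ℤ → ABCD | sval (v nn) ≠ sval (v (nn+1))} := by
      ext v; simp [Alternating]
    rw [he]
    apply isClosed_iInter
    intro nn
    have he2 : {v : ℤ → ABCD | sval (v nn) ≠ sval (v (nn+1))} =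
        (fun v : ℤ → ABCD => (v nn, v (nn+1))) ⁻¹'
          {p : ABCD × ABCD | sval p.1 ≠ sval p.2} := rfl
    rw [he2]
    exact IsClosed.preimage ((continuous_apply nn).prodMk (continuous_apply (nn+1)))
      (isClosed_discrete _)
  have h2 : IsClosed {v : ℤ → ABCD | ∀ i, v i ≠ D} := by
    have he : {v : ℤ → ABCD | ∀ i, v i ≠ D} =
        ⋂ i : ℤ, (fun v : ℤ → ABCD => v i) ⁻¹' {D}ᶜ := by
      ext v; simp
    rw [he]
    exact isClosed_iInter fun i =>
      IsClosed.preimage (continuous_apply i) (isClosed_discrete _)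
  have he : Vset = {v : ℤ → ABCD | Alternating v} ∩ {v : ℤ → ABCD | ∀ i, v i ≠ D} := rfl
  rw [he]
  exact h1.inter h2

lemma ew (n : ℕ) : ∀ v : ℤ → ABCD, ∃ L : ℤ, 1 ≤ L ∧ L ≤ ((3^n : ℕ) : ℤ) ∧
    Ephi^[n] (shiftZ 1 v) = shiftZ L (Ephi^[n] v) := by
  induction n with
  | zero =>
    intro v
    exact ⟨1, le_refl _, by norm_num, by simp⟩
  | succ n ih =>
    intro v
    obtain ⟨L, h1, h2, hL⟩ := ih v
    refine ⟨ulen (Ephi^[n] v) L, ?_, ?_, ?_⟩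
    · have := le_ulen_of_nonneg (Ephi^[n] v) (k := L) (by omega)
      omega
    · have hb := ulen_le_of_nonneg (Ephi^[n] v) (k := L) (by omega)
      have h3 : ((3^(n+1) : ℕ) : ℤ) = 3 * ((3^n : ℕ) : ℤ) := by push_cast; ring
      omega
    · rw [Function.iterate_succ_apply', hL, Ephi_shift, Function.iterate_succ_apply']

lemma norm_rep (n : ℕ) : ∀ (t : ℕ) (m : ℤ) (v : ℤ → ABCD), v ∈ Vset → m.natAbs ≤ t →
    ∃ (m' : ℤ) (w : ℤ → ABCD), w ∈ Vset ∧ 0 ≤ m' ∧ m' ≤ ((3^n : ℕ) : ℤ) ∧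
      shiftZ m (Ephi^[n] v) = shiftZ m' (Ephi^[n] w) := by
  intro t
  induction t with
  | zero =>
    intro m v hv hm
    have h0 : m = 0 := by omega
    exact ⟨0, v, hv, le_refl _, by positivity, by rw [h0]⟩
  | succ t ih =>
    intro m v hv hm
    rcases le_or_gt 0 m with h0 | h0
    · rcases le_or_gt m ((3^n : ℕ) : ℤ) with h1 | h1
      · exact ⟨m, v, hv, h0, h1, rfl⟩
      · obtain ⟨L, hL1, hL2, hL⟩ := ew n v
        have hfact : shiftZ m (Ephi^[n] v) = shiftZ (m - L) (Ephi^[n] (shiftZ 1 v)) := by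
          rw [hL, shiftZ_shiftZ]
          congr 1
          ring
        obtain ⟨m', w, hw, g0, g1, heq⟩ := ih (m - L) (shiftZ 1 v) (Vset_shift hv 1)
          (by omega)
        exact ⟨m', w, hw, g0, g1, by rw [hfact, heq]⟩
    · set u := shiftZ (-1) v with hu
      have huv : shiftZ 1 u = v := by
        rw [hu, shiftZ_shiftZ]
        norm_num [shiftZ_zero]
      obtain ⟨L, hL1, hL2, hL⟩ := ew n u
      have hfact : shiftZ m (Ephi^[n] v) = shiftZ (m + L) (Ephi^[n] u) := by
        rw [← huv, hL, shiftZ_shiftZ]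
      rcases le_or_gt 0 (m + L) with h2 | h2
      · exact ⟨m + L, u, Vset_shift hv (-1), h2, by omega, hfact⟩
      · obtain ⟨m', w, hw, g0, g1, heq⟩ := ih (m + L) u (Vset_shift hv (-1)) (by omega)
        exact ⟨m', w, hw, g0, g1, by rw [hfact, heq]⟩

noncomputable def WnSet (n : ℕ) : Set (ℤ → ABCD) :=
  ⋃ m ∈ Finset.range (3^n + 1), shiftZ (m : ℤ) '' (Ephi^[n] '' Vset)

lemma mem_WnSet {z : ℤ → ABCD} {n : ℕ} : z ∈ WnSet n ↔
    ∃ (m : ℤ) (v : ℤ → ABCD), v ∈ Vset ∧ 0 ≤ m ∧ m ≤ ((3^n : ℕ) : ℤ) ∧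
      z = shiftZ m (Ephi^[n] v) := by
  constructor
  · intro hz
    simp only [WnSet, Set.mem_iUnion, Set.mem_image, Finset.mem_range] at hz
    obtain ⟨m, hm, x, ⟨v, hv, rfl⟩, rfl⟩ := hz
    have hb : m ≤ 3^n := by omega
    exact ⟨(m : ℤ), v, hv, by positivity, by exact_mod_cast hb, rfl⟩
  · rintro ⟨m, v, hv, h0, h1, rfl⟩
    simp only [WnSet, Set.mem_iUnion, Set.mem_image, Finset.mem_range]
    have hc : ((3 ^ n : ℕ) : ℤ) = (3:ℤ) ^ n := by push_cast; ring
    refine ⟨m.toNat, ?_, Ephi^[n] v, ⟨v, hv, rfl⟩, ?_⟩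
    · omega
    · have he : ((m.toNat : ℕ) : ℤ) = m := by omega
      rw [he]

def Wlim : Set (ℤ → ABCD) := ⋂ n, WnSet n

lemma isClosed_WnSet (n : ℕ) : IsClosed (WnSet n) := by
  apply Set.Finite.isClosed_biUnion (Finset.finite_toSet _)
  intro m _
  have hcomp : IsCompact (shiftZ (m : ℤ) '' (Ephi^[n] '' Vset)) :=
    (((isClosed_Vset.isCompact).image (continuous_Ephi_iter n)).image (continuous_shiftZ m))
  exact hcomp.isClosed

lemma isClosed_Wlim : IsClosed Wlim := isClosed_iInter isClosed_WnSet

lemma shift_shiftZ_comm {α : Type*} (m : ℤ) (x : ℤ → α) :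
    shift (shiftZ m x) = shiftZ (m + 1) x := by
  funext n
  show x (n + 1 + m) = x (n + (m + 1))
  congr 1
  ring

lemma shift_image_WnSet (n : ℕ) : shift '' WnSet n = WnSet n := by
  ext z
  constructor
  · rintro ⟨u, hu, rfl⟩
    rw [mem_WnSet] at hu
    obtain ⟨m, v, hv, h0, h1, rfl⟩ := hu
    rw [shift_shiftZ_comm]
    obtain ⟨m', w, hw, g0, g1, heq⟩ := norm_rep n (m+1).natAbs (m+1) v hv (le_refl _)
    rw [heq]
    exact mem_WnSet.2 ⟨m', w, hw, g0, g1, rfl⟩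
  · intro hz
    rw [mem_WnSet] at hz
    obtain ⟨m, v, hv, h0, h1, rfl⟩ := hz
    obtain ⟨m', w, hw, g0, g1, heq⟩ := norm_rep n (m-1).natAbs (m-1) v hv (le_refl _)
    refine ⟨shiftZ (m-1) (Ephi^[n] v), ?_, ?_⟩
    · rw [mem_WnSet]
      exact ⟨m', w, hw, g0, g1, heq⟩
    · rw [shift_shiftZ_comm]
      congr 1
      ring

lemma WnSet_anti (n : ℕ) : WnSet (n+1) ⊆ WnSet n := by
  intro z hz
  rw [mem_WnSet] at hz ⊢
  obtain ⟨m, v, hv, h0, h1, rfl⟩ := hz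
  have hdec : Ephi^[n+1] v = Ephi^[n] (Ephi v) := Function.iterate_succ_apply _ _ _
  obtain ⟨m', w, hw, g0, g1, heq⟩ := norm_rep n m.natAbs m (Ephi v)
    (Ephi_mem_Vset hv) (le_refl _)
  exact ⟨m', w, hw, g0, g1, by rw [hdec, heq]⟩

noncomputable def v0 : ℤ → ABCD := fun i => if i % 2 = 0 then A else B

lemma v0_mem : v0 ∈ Vset := by
  constructor
  · intro n
    show sval (v0 n) ≠ sval (v0 (n+1))
    simp only [v0]
    rcases Int.emod_two_eq_zero_or_one n with h | h
    · rw [if_pos h, if_neg (by omega)]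
      decide
    · rw [if_neg (by omega), if_pos (by omega)]
      decide
  · intro i
    simp only [v0]
    split_ifs <;> decide

lemma WnSet_nonempty (n : ℕ) : (WnSet n).Nonempty :=
  ⟨Ephi^[n] v0, mem_WnSet.2 ⟨0, v0, v0_mem, le_refl _, by positivity,
    (shiftZ_zero _).symm⟩⟩

lemma Wlim_nonempty : Wlim.Nonempty :=
  IsCompact.nonempty_iInter_of_sequence_nonempty_isCompact_isClosed WnSet WnSet_anti
    WnSet_nonempty ((isClosed_WnSet 0).isCompact) isClosed_WnSet

lemma shift_bijective {α : Type*} : Function.Bijective (shift : (ℤ → α) → (ℤ → α)) := by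
  apply Function.bijective_iff_has_inverse.2
  refine ⟨shiftZ (-1), ?_, ?_⟩
  · intro x
    funext n
    show x (n + -1 + 1) = x n
    congr 1
    ring
  · intro x
    funext n
    show x (n + 1 + -1) = x n
    congr 1
    ring

lemma shift_image_Wlim : shift '' Wlim = Wlim := by
  rw [Wlim, Set.image_iInter shift_bijective]
  exact Set.iInter_congr shift_image_WnSet

lemma Wlim_subset_Yset : Wlim ⊆ Yset (fun _ => true) := by
  intro z hz
  apply good_mem_Yset
  intro n
  have hn := Set.mem_iInter.1 hz n
  rw [mem_WnSet] at hn
  obtain ⟨m, v, hv, _, _, rfl⟩ := hn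
  exact ⟨m, v, hv.1, rfl⟩

lemma Wlim_noD {z : ℤ → ABCD} (hz : z ∈ Wlim) : z 0 ≠ D := by
  have h1 := Set.mem_iInter.1 hz 1
  rw [mem_WnSet] at h1
  obtain ⟨m, v, hv, _, _, rfl⟩ := h1
  rw [shiftZ_apply]
  have he : Ephi^[1] v = Ephi v := Function.iterate_one _ ▸ rfl
  rw [he]
  exact Ephi_ne_D hv.2 _

end St18

/-- Non-minimality for `τ = 1^∞`.
The subshift `(Y_{1^∞}, S)` is not minimal. -/
theorem stmt18 : ¬ ShiftMinimal (Yset fun _ => true) := by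
  intro h
  have hW := h St18.Wlim St18.Wlim_subset_Yset St18.Wlim_nonempty St18.isClosed_Wlim
    St18.shift_image_Wlim
  have hq : St18.qseq ∈ St18.Wlim := by
    rw [hW]
    exact St18.qseq_mem_Yset
  exact St18.Wlim_noD hq St18.qseq_zero
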